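/- Let α := Σ_{k=1}^m k² r̃_k. Then for every T > 0 and every X ∈ ℝ, lim_{ε → 0⁺} ε^{−1} p_{ε^{−2} T}( ⌊ε^{−1} X⌋ ) = (2π α T)^{−1/2} exp( −X² / (2 α T) ), where ⌊·⌋ denotes the integer floor. -/

import Mathlib

open Finset Filter MeasureTheory Complex
open scoped Topology Real

/-- `φ(θ) := Σ_{k=1}^m r̃_k (1 − cos(kθ))`. -/
noncomputable def phiFn (m : ℕ) (r : ℕ → ℝ) (θ : ℝ) : ℝ :=
  ∑ k ∈ Finset.Icc 1 m, r k * (1 - Real.cos (k * θ))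

/-- The semi-discrete heat kernel
`p_t(x) := (2π)⁻¹ ∫_{−π}^{π} e^{−ixθ} e^{−tφ(θ)} dθ`, a real number since `φ` is even. -/
noncomputable def hk (m : ℕ) (r : ℕ → ℝ) (t : ℝ) (x : ℤ) : ℝ :=
  ((2 * (Real.pi : ℂ))⁻¹ * ∫ θ in (-Real.pi)..Real.pi,
      Complex.exp (-(x : ℂ) * Complex.I * (θ : ℂ)) *
        Complex.exp (-(t : ℂ) * ((phiFn m r θ : ℝ) : ℂ))).re

lemma phiFn_continuous (m : ℕ) (r : ℕ → ℝ) : Continuous (phiFn m r) := by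
  unfold phiFn; fun_prop

lemma phiFn_zero (m : ℕ) (r : ℕ → ℝ) : phiFn m r 0 = 0 := by
  simp [phiFn]

lemma aux_cos_lim (c : ℝ) :
    Filter.Tendsto (fun θ : ℝ => (1 - Real.cos (c * θ)) / θ ^ 2) (𝓝[≠] (0:ℝ))
      (𝓝 (c ^ 2 / 2)) := by
  rw [← tendsto_sub_nhds_zero_iff]
  have hb : Filter.Tendsto (fun θ : ℝ => c ^ 4 * (5 / 96) * θ ^ 2) (𝓝[≠] (0:ℝ)) (𝓝 0) := by
    have h : Filter.Tendsto (fun θ : ℝ => c ^ 4 * (5 / 96) * θ ^ 2) (𝓝 (0:ℝ))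
        (𝓝 (c ^ 4 * (5 / 96) * 0 ^ 2)) := (Continuous.tendsto (by fun_prop) 0)
    simpa using h.mono_left nhdsWithin_le_nhds
  apply squeeze_zero_norm' _ hb
  have h1 : ∀ᶠ θ : ℝ in 𝓝[≠] (0:ℝ), |c * θ| ≤ 1 := by
    have h : Filter.Tendsto (fun θ : ℝ => |c * θ|) (𝓝 (0:ℝ)) (𝓝 |c * 0|) := (Continuous.tendsto (by fun_prop) 0)
    simp only [mul_zero, abs_zero] at h
    exact (h.mono_left nhdsWithin_le_nhds).eventually_le_const one_pos
  have h2 : ∀ᶠ θ : ℝ in 𝓝[≠] (0:ℝ), θ ≠ 0 := eventually_mem_nhdsWithin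
  filter_upwards [h1, h2] with θ hc hθ
  have hθ2 : (0:ℝ) < θ ^ 2 := by positivity
  have key : (1 - Real.cos (c * θ)) / θ ^ 2 - c ^ 2 / 2
      = -((Real.cos (c * θ) - (1 - (c * θ) ^ 2 / 2)) / θ ^ 2) := by
    field_simp; ring
  rw [Real.norm_eq_abs, key, abs_neg, abs_div, abs_of_pos hθ2, div_le_iff₀ hθ2]
  have hcb := Real.cos_bound hc
  have h4 : |c * θ| ^ 4 = c ^ 4 * θ ^ 4 := by
    rw [abs_mul, mul_pow, ← _root_.abs_pow, ← _root_.abs_pow, _root_.abs_of_nonneg (by positivity : (0:ℝ) ≤ c ^ 4),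
      _root_.abs_of_nonneg (by positivity : (0:ℝ) ≤ θ ^ 4)]
  nlinarith [abs_nonneg (Real.cos (c * θ) - (1 - (c * θ) ^ 2 / 2))]

lemma phi_div_lim (m : ℕ) (r : ℕ → ℝ) :
    Filter.Tendsto (fun θ : ℝ => phiFn m r θ / θ ^ 2) (𝓝[≠] (0:ℝ))
      (𝓝 ((∑ k ∈ Finset.Icc 1 m, (k : ℝ) ^ 2 * r k) / 2)) := by
  have h : Filter.Tendsto (fun θ : ℝ => ∑ k ∈ Finset.Icc 1 m,
      r k * ((1 - Real.cos (k * θ)) / θ ^ 2)) (𝓝[≠] (0:ℝ))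
      (𝓝 (∑ k ∈ Finset.Icc 1 m, r k * ((k : ℝ) ^ 2 / 2))) :=
    tendsto_finset_sum _ fun k _ => (aux_cos_lim (k : ℝ)).const_mul (r k)
  have he : (∑ k ∈ Finset.Icc 1 m, r k * ((k : ℝ) ^ 2 / 2))
      = (∑ k ∈ Finset.Icc 1 m, (k : ℝ) ^ 2 * r k) / 2 := by
    rw [Finset.sum_div]; exact Finset.sum_congr rfl fun k _ => by ring
  rw [← he]
  refine h.congr fun θ => ?_
  rw [phiFn, Finset.sum_div]
  exact Finset.sum_congr rfl fun k _ => by ring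

lemma phi_lower (m : ℕ) (hm : 1 ≤ m) (r : ℕ → ℝ) (hr : ∀ k ∈ Finset.Icc 1 m, 0 < r k)
    {θ : ℝ} (hθ : |θ| ≤ Real.pi) : 2 * r 1 / Real.pi ^ 2 * θ ^ 2 ≤ phiFn m r θ := by
  have h1m : (1 : ℕ) ∈ Finset.Icc 1 m := by simp [hm]
  have hterm : r 1 * (1 - Real.cos ((1 : ℕ) * θ)) ≤ phiFn m r θ := by
    refine Finset.single_le_sum (f := fun k => r k * (1 - Real.cos (k * θ))) ?_ h1m
    intro k hk
    have := (hr k hk).le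
    have h1 := Real.cos_le_one ((k : ℝ) * θ)
    nlinarith
  have hcos : Real.cos θ ≤ 1 - 2 / Real.pi ^ 2 * θ ^ 2 := Real.cos_le_one_sub_mul_cos_sq hθ
  have hr1 := (hr 1 h1m).le
  have hπ := Real.pi_pos
  simp only [Nat.cast_one, one_mul] at hterm
  have : 2 * r 1 / Real.pi ^ 2 * θ ^ 2 ≤ r 1 * (1 - Real.cos θ) := by
    rw [div_mul_eq_mul_div, div_le_iff₀ (by positivity)]
    have hA : 0 ≤ 1 - Real.cos θ - 2 / Real.pi ^ 2 * θ ^ 2 := by linarith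
    have hB := mul_nonneg (mul_nonneg hr1 hA) (sq_nonneg Real.pi)
    have h2 : 2 / Real.pi ^ 2 * θ ^ 2 * Real.pi ^ 2 = 2 * θ ^ 2 := by field_simp
    nlinarith
  linarith

set_option maxHeartbeats 1600000 in
theorem stmt15 (m : ℕ) (hm : 1 ≤ m) (r : ℕ → ℝ) (hr : ∀ k ∈ Finset.Icc 1 m, 0 < r k) :
    ∀ T : ℝ, 0 < T → ∀ X : ℝ,
      Filter.Tendsto
        (fun ε : ℝ => ε⁻¹ * hk m r ((ε ^ 2)⁻¹ * T) ⌊ε⁻¹ * X⌋)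
        (nhdsWithin 0 (Set.Ioi 0))
        (nhds ((2 * Real.pi * (∑ k ∈ Finset.Icc 1 m, (k : ℝ) ^ 2 * r k) * T) ^ (-(1/2) : ℝ) *
          Real.exp (-X ^ 2 / (2 * (∑ k ∈ Finset.Icc 1 m, (k : ℝ) ^ 2 * r k) * T)))) := by
  intro T hT X
  set α : ℝ := ∑ k ∈ Finset.Icc 1 m, (k : ℝ) ^ 2 * r k with hα_def
  have hne : (Finset.Icc 1 m).Nonempty := ⟨1, by simp [hm]⟩
  have hα : 0 < α := by
    refine Finset.sum_pos (fun k hk => ?_) hne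
    have hk1 : 1 ≤ k := (Finset.mem_Icc.1 hk).1
    have hrk := hr k hk
    have : (0:ℝ) < (k:ℝ) := by exact_mod_cast hk1
    positivity
  have hr1 : 0 < r 1 := hr 1 (by simp [hm])
  have hπ : 0 < Real.pi := Real.pi_pos
  set a : ℝ := α * T / 2 with ha_def
  have ha : 0 < a := by positivity
  set c' : ℝ := 2 * r 1 / Real.pi ^ 2 * T with hc'_def
  have hc' : 0 < c' := by positivity
  set F : ℝ → ℝ → ℂ := fun ε θ =>
    Complex.exp (-((⌊ε⁻¹ * X⌋ : ℤ) : ℂ) * Complex.I * (θ : ℂ)) *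
      Complex.exp (-(((ε ^ 2)⁻¹ * T : ℝ) : ℂ) * ((phiFn m r θ : ℝ) : ℂ)) with hF_def
  set G : ℝ → ℝ → ℂ := fun ε u =>
    Set.indicator (Set.Ioc (-(Real.pi / ε)) (Real.pi / ε)) (fun u => F ε (ε * u)) u with hG_def
  set g : ℝ → ℂ := fun u =>
    Complex.exp (-(X : ℂ) * Complex.I * (u : ℂ)) * Complex.exp (-((a * u ^ 2 : ℝ) : ℂ))
    with hg_def
  -- main convergence via dominated convergence
  have hmain : Filter.Tendsto (fun ε => ∫ u : ℝ, G ε u) (𝓝[>] (0:ℝ)) (𝓝 (∫ u : ℝ, g u)) := by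
    apply MeasureTheory.tendsto_integral_filter_of_dominated_convergence
      (fun u => Real.exp (-c' * u ^ 2))
    · -- measurability
      refine Eventually.of_forall fun ε => ?_
      refine AEStronglyMeasurable.indicator ?_ measurableSet_Ioc
      refine Continuous.aestronglyMeasurable ?_
      have := phiFn_continuous m r
      fun_prop
    · -- bound
      filter_upwards [self_mem_nhdsWithin] with ε (hε : (0:ℝ) < ε)
      refine ae_of_all _ fun u => ?_
      simp only [hG_def]
      by_cases hu : u ∈ Set.Ioc (-(Real.pi / ε)) (Real.pi / ε)
      · rw [Set.indicator_of_mem hu]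
        have habs : |ε * u| ≤ Real.pi := by
          rw [abs_le]
          constructor
          · have := hu.1
            have h1 : ε * (-(Real.pi / ε)) ≤ ε * u := by nlinarith [hu.1]
            calc -Real.pi = ε * (-(Real.pi / ε)) := by field_simp
              _ ≤ ε * u := h1
          · calc ε * u ≤ ε * (Real.pi / ε) := by nlinarith [hu.2]
              _ = Real.pi := by field_simp
        have hφ := phi_lower m hm r hr habs
        rw [hF_def]
        simp only
        rw [← Complex.exp_add, Complex.norm_exp, Real.exp_le_exp]
        have hre : (-((⌊ε⁻¹ * X⌋ : ℤ) : ℂ) * Complex.I * ((ε * u : ℝ) : ℂ) +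
            -(((ε ^ 2)⁻¹ * T : ℝ) : ℂ) * ((phiFn m r (ε * u) : ℝ) : ℂ)).re
            = -((ε ^ 2)⁻¹ * T * phiFn m r (ε * u)) := by
          simp only [Complex.add_re, Complex.mul_re, Complex.mul_im, Complex.neg_re,
            Complex.neg_im, Complex.I_re, Complex.I_im, Complex.ofReal_re, Complex.ofReal_im,
            Complex.intCast_re, Complex.intCast_im]
          ring
        rw [hre]
        have hεδ : (ε ^ 2)⁻¹ * T * (2 * r 1 / Real.pi ^ 2 * (ε * u) ^ 2) = c' * u ^ 2 := by
          rw [hc'_def]; field_simp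
        have h1 : c' * u ^ 2 ≤ (ε ^ 2)⁻¹ * T * phiFn m r (ε * u) := by
          rw [← hεδ]
          have h0 : (0:ℝ) ≤ (ε ^ 2)⁻¹ * T := by positivity
          exact mul_le_mul_of_nonneg_left hφ h0
        linarith
      · rw [Set.indicator_of_notMem hu]
        simp only [norm_zero]
        positivity
    · exact integrable_exp_neg_mul_sq hc'
    · -- pointwise limit
      refine ae_of_all _ fun u => ?_
      have hq1 : Filter.Tendsto (fun ε : ℝ => ((⌊ε⁻¹ * X⌋ : ℤ) : ℝ) * ε) (𝓝[>] (0:ℝ))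
          (𝓝 X) := by
        have hlow : Filter.Tendsto (fun ε : ℝ => X - ε) (𝓝[>] (0:ℝ)) (𝓝 X) := by
          have : Filter.Tendsto (fun ε : ℝ => X - ε) (𝓝 (0:ℝ)) (𝓝 (X - 0)) :=
            Continuous.tendsto (by fun_prop) 0
          simpa using this.mono_left nhdsWithin_le_nhds
        refine tendsto_of_tendsto_of_tendsto_of_le_of_le' hlow tendsto_const_nhds ?_ ?_
        · filter_upwards [self_mem_nhdsWithin] with ε (hε : (0:ℝ) < ε)
          have h1 : ε⁻¹ * X - 1 < (⌊ε⁻¹ * X⌋ : ℝ) := Int.sub_one_lt_floor _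
          have h2 : (ε⁻¹ * X - 1) * ε ≤ (⌊ε⁻¹ * X⌋ : ℝ) * ε := by nlinarith
          have h3 : (ε⁻¹ * X - 1) * ε = X - ε := by field_simp
          linarith
        · filter_upwards [self_mem_nhdsWithin] with ε (hε : (0:ℝ) < ε)
          have h1 : (⌊ε⁻¹ * X⌋ : ℝ) ≤ ε⁻¹ * X := Int.floor_le _
          have h2 : (⌊ε⁻¹ * X⌋ : ℝ) * ε ≤ ε⁻¹ * X * ε := by nlinarith
          have h3 : ε⁻¹ * X * ε = X := by field_simp
          linarith
      have hq2 : Filter.Tendsto (fun ε : ℝ => (ε ^ 2)⁻¹ * T * phiFn m r (ε * u)) (𝓝[>] (0:ℝ))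
          (𝓝 (a * u ^ 2)) := by
        by_cases hu : u = 0
        · subst hu
          simp only [mul_zero, phiFn_zero]
          simpa using (tendsto_const_nhds :
            Filter.Tendsto (fun _ : ℝ => (0:ℝ)) (𝓝[>] (0:ℝ)) (𝓝 0))
        · have hεu : Filter.Tendsto (fun ε : ℝ => ε * u) (𝓝[>] (0:ℝ)) (𝓝[≠] (0:ℝ)) := by
            rw [tendsto_nhdsWithin_iff]
            constructor
            · have : Filter.Tendsto (fun ε : ℝ => ε * u) (𝓝 (0:ℝ)) (𝓝 (0 * u)) :=
                Continuous.tendsto (by fun_prop) 0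
              simpa using this.mono_left nhdsWithin_le_nhds
            · filter_upwards [self_mem_nhdsWithin] with ε (hε : (0:ℝ) < ε)
              exact mul_ne_zero hε.ne' hu
          have h := ((phi_div_lim m r).comp hεu).const_mul (T * u ^ 2)
          rw [← hα_def] at h
          have heq : (fun ε : ℝ => T * u ^ 2 * ((fun θ : ℝ => phiFn m r θ / θ ^ 2) ∘
              fun ε : ℝ => ε * u) ε) =ᶠ[𝓝[>] (0:ℝ)]
              (fun ε : ℝ => (ε ^ 2)⁻¹ * T * phiFn m r (ε * u)) := by
            filter_upwards [self_mem_nhdsWithin] with ε (hε : (0:ℝ) < ε)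
            simp only [Function.comp]
            rw [mul_pow]
            field_simp
          have := h.congr' heq
          convert this using 2
          rw [ha_def]; ring
      -- assemble pointwise limit
      have hexp1 : Filter.Tendsto
          (fun ε : ℝ => Complex.exp (-((((⌊ε⁻¹ * X⌋ : ℤ) : ℝ) * ε : ℝ) : ℂ) * Complex.I * (u : ℂ)))
          (𝓝[>] (0:ℝ)) (𝓝 (Complex.exp (-(X : ℂ) * Complex.I * (u : ℂ)))) := by
        have h0 := (Complex.continuous_ofReal.tendsto X).comp hq1
        exact (((h0.neg.mul_const Complex.I).mul_const (u : ℂ))).cexp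
      have hexp2 : Filter.Tendsto
          (fun ε : ℝ => Complex.exp (-(((ε ^ 2)⁻¹ * T * phiFn m r (ε * u) : ℝ) : ℂ)))
          (𝓝[>] (0:ℝ)) (𝓝 (Complex.exp (-((a * u ^ 2 : ℝ) : ℂ)))) := by
        have h0 := (Complex.continuous_ofReal.tendsto _).comp hq2
        exact h0.neg.cexp
      have hlim := hexp1.mul hexp2
      refine hlim.congr' ?_
      have hδ : 0 < Real.pi / (|u| + 1) := by positivity
      filter_upwards [Ioo_mem_nhdsGT_of_mem (Set.left_mem_Ico.2 hδ)] with ε hε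
      obtain ⟨hε0, hεδ⟩ := hε
      have hmem : u ∈ Set.Ioc (-(Real.pi / ε)) (Real.pi / ε) := by
        have h1 : ε * (|u| + 1) < Real.pi := by
          rw [← lt_div_iff₀ (by positivity)] at *
          exact hεδ
        have h2 : |u| + 1 < Real.pi / ε := by
          rw [lt_div_iff₀ hε0]; nlinarith
        constructor
        · have := neg_abs_le u; nlinarith [abs_nonneg u]
        · have := le_abs_self u; nlinarith [abs_nonneg u]
      simp only [hG_def]
      rw [Set.indicator_of_mem hmem, hF_def]
      congr 1
      · congr 1
        push_cast
        ring
      · congr 1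
        push_cast
        ring
  -- value of the limit integral
  have hL : (∫ u : ℝ, g u)
      = ((((Real.pi / a) ^ ((1:ℝ)/2) : ℝ) : ℂ)) * Complex.exp (((-X ^ 2 / (4 * a) : ℝ) : ℂ)) := by
    have hgauss := fourierIntegral_gaussian (b := (a : ℂ)) (by simpa using ha) (-(X : ℂ))
    have hfun : (fun u : ℝ => g u) = fun u : ℝ =>
        Complex.exp (Complex.I * (-(X : ℂ)) * (u : ℂ)) * Complex.exp (-(a : ℂ) * (u : ℂ) ^ 2) := by
      funext u
      simp only [hg_def]
      congr 1
      · exact congrArg Complex.exp (by ring)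
      · exact congrArg Complex.exp (by push_cast; ring)
    rw [hfun, hgauss]
    congr 1
    · rw [Complex.ofReal_cpow (div_pos hπ ha).le]
      push_cast
      norm_num
    · exact congrArg Complex.exp (by push_cast; ring)
  have hval : ((2 * (Real.pi : ℂ))⁻¹ * ∫ u : ℝ, g u).re
      = (2 * Real.pi * α * T) ^ (-(1/2) : ℝ) * Real.exp (-X ^ 2 / (2 * α * T)) := by
    rw [hL, ← Complex.ofReal_exp]
    rw [show (2 * (Real.pi : ℂ))⁻¹ = (((2 * Real.pi)⁻¹ : ℝ) : ℂ) by push_cast; ring]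
    rw [← Complex.ofReal_mul, ← Complex.ofReal_mul, Complex.ofReal_re]
    have hexp_eq : -X ^ 2 / (4 * a) = -X ^ 2 / (2 * α * T) := by
      rw [ha_def]; congr 1; ring
    have hcoef : (2 * Real.pi)⁻¹ * (Real.pi / a) ^ ((1:ℝ)/2)
        = (2 * Real.pi * α * T) ^ (-(1/2) : ℝ) := by
      have hs : Real.pi / a = 2 * Real.pi / (α * T) := by
        rw [ha_def]; field_simp
      have hαT : (0:ℝ) < α * T := by positivity
      rw [hs, Real.div_rpow (by positivity) hαT.le,
        show 2 * Real.pi * α * T = (2 * Real.pi) * (α * T) by ring,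
        Real.rpow_neg (by positivity), Real.mul_rpow (by positivity) hαT.le, mul_inv]
      have hkey : (2 * Real.pi) ^ ((1:ℝ)/2) * (2 * Real.pi) ^ ((1:ℝ)/2) = 2 * Real.pi := by
        rw [← Real.rpow_add (by positivity)]; norm_num
      have h1 : (0:ℝ) < (2 * Real.pi) ^ ((1:ℝ)/2) := Real.rpow_pos_of_pos (by positivity) _
      have h2 : (0:ℝ) < (α * T) ^ ((1:ℝ)/2) := Real.rpow_pos_of_pos hαT _
      field_simp
      nlinarith [hkey, h1, h2]
    rw [hexp_eq, ← hcoef]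
    ring
  have hfinal := hmain.const_mul ((2 * (Real.pi : ℂ))⁻¹)
  have hre0 := (Complex.continuous_re.tendsto _).comp hfinal
  rw [hval] at hre0
  refine Filter.Tendsto.congr' ?_ hre0
  filter_upwards [self_mem_nhdsWithin] with ε (hε : (0:ℝ) < ε)
  have hle : -(Real.pi / ε) ≤ Real.pi / ε := by
    have := div_pos hπ hε; linarith
  have he1 : ε * -(Real.pi / ε) = -Real.pi := by field_simp
  have he2 : ε * (Real.pi / ε) = Real.pi := by field_simp
  have h1 : (∫ u : ℝ, G ε u) = ∫ u in Set.Ioc (-(Real.pi / ε)) (Real.pi / ε), F ε (ε * u) := by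
    simp only [hG_def]
    exact MeasureTheory.integral_indicator measurableSet_Ioc
  have h2 : (∫ u in (-(Real.pi / ε))..(Real.pi / ε), F ε (ε * u))
      = ∫ u in Set.Ioc (-(Real.pi / ε)) (Real.pi / ε), F ε (ε * u) :=
    intervalIntegral.integral_of_le hle
  have h3 : (∫ u in (-(Real.pi / ε))..(Real.pi / ε), F ε (ε * u))
      = ε⁻¹ • ∫ θ in (ε * -(Real.pi / ε))..(ε * (Real.pi / ε)), F ε θ :=
    intervalIntegral.integral_comp_mul_left (F ε) hε.ne'
  simp only [Function.comp_apply]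
  rw [h1, ← h2, h3, he1, he2]
  show ((2 * (Real.pi : ℂ))⁻¹ * (ε⁻¹ • ∫ θ in (-Real.pi)..Real.pi, F ε θ)).re
      = ε⁻¹ * hk m r ((ε ^ 2)⁻¹ * T) ⌊ε⁻¹ * X⌋
  unfold hk
  rw [Complex.real_smul,
    show (2 * (Real.pi : ℂ))⁻¹ * (((ε⁻¹ : ℝ) : ℂ) * ∫ θ in (-Real.pi)..Real.pi, F ε θ)
      = ((ε⁻¹ : ℝ) : ℂ) * ((2 * (Real.pi : ℂ))⁻¹ * ∫ θ in (-Real.pi)..Real.pi, F ε θ) by ring,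
    Complex.re_ofReal_mul]
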